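/- Let f : ℝ → ℝ satisfy σ ≤ f(ξ) ≤ c₁ |ξ|^{α+1} + c₂ for all ξ, with positive constants σ, c₁, c₂, α. Let Ω be a bounded measurable set with |Ω| > 0, and let u₁, u₂ : Ω → ℝ be bounded measurable functions with f Lipschitz with constant L on the range of u₁ and u₂. Then the map F(u) = f(u)/(∫_Ω f(u) dx)² satisfies ‖F(u₁) − F(u₂)‖_{L²(Ω)} ≤ C ‖u₁ − u₂‖_{L²(Ω)} for a constant C depending only on L, σ, |Ω|, and the L^∞ bounds of u₁, u₂. -/

import Mathlib

open Real MeasureTheory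
open scoped ENNReal

/-- Local Lipschitz property of the nonlocal nonlinearity
`F u = f(u) / (∫_Ω f(u))²` in `L²(Ω)`. -/
theorem nonlocal_nonlinearity_lipschitz (N : ℕ)
    (Ω : Set (EuclideanSpace ℝ (Fin N)))
    (hΩmeas : MeasurableSet Ω) (hΩbdd : Bornology.IsBounded Ω)
    (hΩpos : 0 < (volume Ω).toReal)
    (f : ℝ → ℝ) (σ c₁ c₂ α : ℝ)
    (hσ : 0 < σ) (hc₁ : 0 < c₁) (hc₂ : 0 < c₂) (hα : 0 < α)
    (hf : ∀ ξ : ℝ, σ ≤ f ξ ∧ f ξ ≤ c₁ * |ξ| ^ (α + 1) + c₂)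
    (L : NNReal) (M : ℝ) (hM : 0 ≤ M)
    (hLip : LipschitzOnWith L f (Set.Icc (-M) M)) :
    ∃ C : ℝ, 0 ≤ C ∧
      ∀ u₁ u₂ : EuclideanSpace ℝ (Fin N) → ℝ,
        Measurable u₁ → Measurable u₂ →
        (∀ x ∈ Ω, |u₁ x| ≤ M) → (∀ x ∈ Ω, |u₂ x| ≤ M) →
        eLpNorm
            (fun x => f (u₁ x) / (∫ y in Ω, f (u₁ y)) ^ 2
              - f (u₂ x) / (∫ y in Ω, f (u₂ y)) ^ 2) 2 (volume.restrict Ω)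
          ≤ ENNReal.ofReal C *
            eLpNorm (fun x => u₁ x - u₂ x) 2 (volume.restrict Ω) := by
  classical
  have hMM : -M ≤ M := neg_le_self hM
  -- the clamp function onto [-M, M]
  set clamp : ℝ → ℝ := fun t => max (-M) (min M t) with hclampdef
  have hclamp_mem : ∀ t, clamp t ∈ Set.Icc (-M) M := fun t =>
    ⟨le_max_left _ _, max_le hMM (min_le_left _ _)⟩
  have hclamp_eq : ∀ t ∈ Set.Icc (-M) M, clamp t = t := by
    intro t ht
    simp only [hclampdef]
    rw [min_eq_right ht.2, max_eq_right ht.1]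
  have hclamp_lip : ∀ a b : ℝ, |clamp a - clamp b| ≤ |a - b| := by
    intro a b
    have h1 : |clamp a - clamp b| ≤ |min M a - min M b| := by
      simp only [hclampdef]
      rw [max_comm (-M) (min M a), max_comm (-M) (min M b)]
      exact abs_max_sub_max_le_abs _ _ _
    refine h1.trans ?_
    have := abs_min_sub_min_le_max M a M b
    simpa using this
  have hclamp_cont : Continuous clamp :=
    continuous_const.max (continuous_const.min continuous_id)
  -- the globally defined nonlinearity
  set g : ℝ → ℝ := fun t => f (clamp t) with hgdef
  set K : ℝ := c₁ * M ^ (α + 1) + c₂ with hKdef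
  have hK0 : 0 < K := by positivity
  have hg_lb : ∀ t, σ ≤ g t := fun t => (hf (clamp t)).1
  have hg_ub : ∀ t, g t ≤ K := by
    intro t
    have h1 := (hf (clamp t)).2
    have h2 : |clamp t| ≤ M := abs_le.mpr (hclamp_mem t)
    have h3 : |clamp t| ^ (α + 1) ≤ M ^ (α + 1) :=
      Real.rpow_le_rpow (abs_nonneg _) h2 (by linarith)
    calc g t ≤ c₁ * |clamp t| ^ (α + 1) + c₂ := h1
      _ ≤ c₁ * M ^ (α + 1) + c₂ := by nlinarith
  have hgL : ∀ a b : ℝ, |g a - g b| ≤ (L : ℝ) * |a - b| := by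
    intro a b
    have h1 : dist (g a) (g b) ≤ (L : ℝ) * dist (clamp a) (clamp b) :=
      hLip.dist_le_mul _ (hclamp_mem a) _ (hclamp_mem b)
    rw [Real.dist_eq, Real.dist_eq] at h1
    exact h1.trans (mul_le_mul_of_nonneg_left (hclamp_lip a b) L.2)
  have hg_cont : Continuous g :=
    hLip.continuousOn.comp_continuous hclamp_cont hclamp_mem
  -- measure-theoretic setup
  set μ := volume.restrict Ω with hμdef
  have hΩfin : volume Ω ≠ ⊤ := hΩbdd.measure_lt_top.ne
  have hμuniv : μ Set.univ = volume Ω := by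
    rw [hμdef, Measure.restrict_apply_univ]
  haveI : IsFiniteMeasure μ := ⟨by rw [hμuniv]; exact hΩbdd.measure_lt_top⟩
  have hμne : μ ≠ 0 := by
    rw [← Measure.measure_univ_ne_zero, hμuniv]
    exact fun h => by simp [h] at hΩpos
  set Ωvol : ℝ := (volume Ω).toReal with hΩvoldef
  set s : ℝ := σ * Ωvol with hsdef
  have hs : 0 < s := mul_pos hσ hΩpos
  set A : ℝ := (L : ℝ) / s ^ 2 with hAdef
  set Bc : ℝ := K * (2 * K * Ωvol) * ((L : ℝ) * Real.sqrt Ωvol) / s ^ 4 with hBcdef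
  have hA0 : 0 ≤ A := by positivity
  have hBc0 : 0 ≤ Bc := by positivity
  refine ⟨A + Bc * Real.sqrt Ωvol, by positivity, ?_⟩
  intro u₁ u₂ hm1 hm2 hb1 hb2
  have hfg1 : ∀ x ∈ Ω, f (u₁ x) = g (u₁ x) := by
    intro x hx
    rw [hgdef]
    simp only
    rw [hclamp_eq _ (abs_le.mp (hb1 x hx))]
  have hfg2 : ∀ x ∈ Ω, f (u₂ x) = g (u₂ x) := by
    intro x hx
    rw [hgdef]
    simp only
    rw [hclamp_eq _ (abs_le.mp (hb2 x hx))]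
  set I₁ : ℝ := ∫ y in Ω, g (u₁ y) with hI₁def
  set I₂ : ℝ := ∫ y in Ω, g (u₂ y) with hI₂def
  have hI1rw : (∫ y in Ω, f (u₁ y)) = I₁ :=
    setIntegral_congr_fun hΩmeas (fun x hx => hfg1 x hx)
  have hI2rw : (∫ y in Ω, f (u₂ y)) = I₂ :=
    setIntegral_congr_fun hΩmeas (fun x hx => hfg2 x hx)
  -- integrability of g ∘ uᵢ
  have habsg : ∀ (u : EuclideanSpace ℝ (Fin N) → ℝ) x, ‖g (u x)‖ ≤ K := by
    intro u x
    rw [Real.norm_eq_abs, abs_le]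
    exact ⟨by linarith [hg_lb (u x)], hg_ub (u x)⟩
  have hint1 : Integrable (fun x => g (u₁ x)) μ :=
    (integrable_const K).mono' (hg_cont.measurable.comp hm1).aestronglyMeasurable
      (Filter.Eventually.of_forall (habsg u₁))
  have hint2 : Integrable (fun x => g (u₂ x)) μ :=
    (integrable_const K).mono' (hg_cont.measurable.comp hm2).aestronglyMeasurable
      (Filter.Eventually.of_forall (habsg u₂))
  have hconst_int : ∀ c : ℝ, IntegrableOn (fun _ => c) Ω volume := fun c =>
    integrableOn_const hΩbdd.measure_lt_top.ne
  have hIlb : ∀ (u : EuclideanSpace ℝ (Fin N) → ℝ), Integrable (fun x => g (u x)) μ →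
      s ≤ ∫ y in Ω, g (u y) := by
    intro u hint
    have h1 : (∫ _ in Ω, σ) ≤ ∫ y in Ω, g (u y) :=
      setIntegral_mono_on (hconst_int σ) hint hΩmeas (fun x _ => hg_lb (u x))
    rwa [setIntegral_const, smul_eq_mul, mul_comm] at h1
  have hIub : ∀ (u : EuclideanSpace ℝ (Fin N) → ℝ), Integrable (fun x => g (u x)) μ →
      (∫ y in Ω, g (u y)) ≤ K * Ωvol := by
    intro u hint
    have h1 : (∫ y in Ω, g (u y)) ≤ ∫ _ in Ω, K :=
      setIntegral_mono_on hint (hconst_int K) hΩmeas (fun x _ => hg_ub (u x))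
    rwa [setIntegral_const, smul_eq_mul, mul_comm] at h1
  have hI1lb : s ≤ I₁ := hIlb u₁ hint1
  have hI2lb : s ≤ I₂ := hIlb u₂ hint2
  have hI1ub : I₁ ≤ K * Ωvol := hIub u₁ hint1
  have hI2ub : I₂ ≤ K * Ωvol := hIub u₂ hint2
  have hI1pos : 0 < I₁ := lt_of_lt_of_le hs hI1lb
  have hI2pos : 0 < I₂ := lt_of_lt_of_le hs hI2lb
  -- the difference and its L² norm
  set d : EuclideanSpace ℝ (Fin N) → ℝ := fun x => u₁ x - u₂ x with hddef
  have hd_meas : Measurable d := hm1.sub hm2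
  have hd_mem : MemLp d 2 μ := by
    refine MemLp.of_bound hd_meas.aestronglyMeasurable (2 * M) ?_
    rw [hμdef, ae_restrict_iff' hΩmeas]
    refine Filter.Eventually.of_forall (fun x hx => ?_)
    have h1 := abs_le.mp (hb1 x hx)
    have h2 := abs_le.mp (hb2 x hx)
    rw [Real.norm_eq_abs, hddef, abs_le]
    constructor <;> simp only <;> linarith
  set E : ℝ≥0∞ := eLpNorm d 2 μ with hEdef
  have hE_ne_top : E ≠ ⊤ := hd_mem.eLpNorm_ne_top
  set D : ℝ := E.toReal with hDdef
  have hD0 : 0 ≤ D := ENNReal.toReal_nonneg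
  have hd_int : Integrable d μ := hd_mem.integrable one_le_two
  -- Cauchy-Schwarz: L¹ norm bounded by L² norm
  have hL1 : (∫ x in Ω, |d x|) ≤ Real.sqrt Ωvol * D := by
    have h1 : ENNReal.ofReal (∫ x, ‖d x‖ ∂μ) = ∫⁻ x, ‖d x‖ₑ ∂μ :=
      ofReal_integral_norm_eq_lintegral_enorm hd_int
    have h2 : eLpNorm d 1 μ ≤ eLpNorm d 2 μ * μ Set.univ ^
        (1 / (1 : ℝ≥0∞).toReal - 1 / (2 : ℝ≥0∞).toReal) :=
      eLpNorm_le_eLpNorm_mul_rpow_measure_univ one_le_two hd_meas.aestronglyMeasurable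
    rw [eLpNorm_one_eq_lintegral_enorm, ← h1] at h2
    have hexp : (1 / (1 : ℝ≥0∞).toReal - 1 / (2 : ℝ≥0∞).toReal) = (1/2 : ℝ) := by
      norm_num
    rw [hexp, hμuniv] at h2
    have hrhs_ne_top : E * volume Ω ^ (1/2 : ℝ) ≠ ⊤ :=
      ENNReal.mul_ne_top hE_ne_top (ENNReal.rpow_ne_top_of_nonneg (by norm_num) hΩfin)
    have h3 := ENNReal.toReal_mono hrhs_ne_top h2
    rw [ENNReal.toReal_ofReal (integral_nonneg (fun x => norm_nonneg _)),
      ENNReal.toReal_mul, ← ENNReal.toReal_rpow] at h3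
    have h4 : (∫ x in Ω, |d x|) = ∫ x, ‖d x‖ ∂μ := by
      simp [hμdef, Real.norm_eq_abs]
    rw [h4]
    refine h3.trans (le_of_eq ?_)
    rw [← Real.sqrt_eq_rpow]
    ring
  -- the integrals are close
  have hII : |I₁ - I₂| ≤ (L : ℝ) * (Real.sqrt Ωvol * D) := by
    have h1 : I₁ - I₂ = ∫ x in Ω, (g (u₁ x) - g (u₂ x)) := by
      rw [hI₁def, hI₂def, integral_sub hint1 hint2]
    rw [h1]
    have h2 : |∫ x in Ω, (g (u₁ x) - g (u₂ x))| ≤ ∫ x in Ω, |g (u₁ x) - g (u₂ x)| := by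
      simpa [Real.norm_eq_abs] using norm_integral_le_integral_norm
        (μ := μ) (f := fun x => g (u₁ x) - g (u₂ x))
    refine h2.trans ?_
    have h3 : (∫ x in Ω, |g (u₁ x) - g (u₂ x)|) ≤ ∫ x in Ω, (L : ℝ) * |d x| := by
      refine setIntegral_mono_on (hint1.sub hint2).abs (hd_int.abs.const_mul _) hΩmeas ?_
      intro x _
      exact hgL (u₁ x) (u₂ x)
    refine h3.trans ?_
    rw [integral_const_mul]
    exact mul_le_mul_of_nonneg_left hL1 L.2
  -- pointwise bound
  have hpt : ∀ x ∈ Ω, |g (u₁ x) / I₁ ^ 2 - g (u₂ x) / I₂ ^ 2| ≤ A * |d x| + Bc * D := by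
    intro x hx
    set a : ℝ := g (u₁ x)
    set b : ℝ := g (u₂ x)
    have hb_ub : b ≤ K := hg_ub _
    have hb_lb : (0:ℝ) < b := lt_of_lt_of_le hσ (hg_lb _)
    have key : a / I₁ ^ 2 - b / I₂ ^ 2
        = (a - b) / I₁ ^ 2 + b * (I₂ ^ 2 - I₁ ^ 2) / (I₁ ^ 2 * I₂ ^ 2) := by
      field_simp
      ring
    rw [key]
    have hsq1 : s ^ 2 ≤ I₁ ^ 2 := pow_le_pow_left₀ hs.le hI1lb 2
    have hsq2 : s ^ 2 ≤ I₂ ^ 2 := pow_le_pow_left₀ hs.le hI2lb 2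
    have t1 : |(a - b) / I₁ ^ 2| ≤ ((L : ℝ) * |d x|) / s ^ 2 := by
      rw [abs_div, abs_of_pos (pow_pos hI1pos 2)]
      exact div_le_div₀ (by positivity) (hgL (u₁ x) (u₂ x)) (by positivity) hsq1
    have habs2 : |I₂ ^ 2 - I₁ ^ 2| ≤ ((L : ℝ) * (Real.sqrt Ωvol * D)) * (2 * K * Ωvol) := by
      have h5 : I₂ ^ 2 - I₁ ^ 2 = (I₂ - I₁) * (I₂ + I₁) := by ring
      rw [h5, abs_mul, abs_sub_comm]
      have h6 : |I₂ + I₁| ≤ 2 * K * Ωvol := by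
        rw [abs_of_pos (by linarith)]
        linarith
      exact mul_le_mul hII h6 (abs_nonneg _) (by positivity)
    have t2 : |b * (I₂ ^ 2 - I₁ ^ 2) / (I₁ ^ 2 * I₂ ^ 2)|
        ≤ K * (((L : ℝ) * (Real.sqrt Ωvol * D)) * (2 * K * Ωvol)) / (s ^ 2 * s ^ 2) := by
      rw [abs_div, abs_mul, abs_of_pos hb_lb,
        abs_of_pos (mul_pos (pow_pos hI1pos 2) (pow_pos hI2pos 2))]
      refine div_le_div₀ (by positivity) ?_ (by positivity) ?_
      · exact mul_le_mul hb_ub habs2 (abs_nonneg _) hK0.le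
      · exact mul_le_mul hsq1 hsq2 (by positivity) (by positivity)
    calc |(a - b) / I₁ ^ 2 + b * (I₂ ^ 2 - I₁ ^ 2) / (I₁ ^ 2 * I₂ ^ 2)|
        ≤ |(a - b) / I₁ ^ 2| + |b * (I₂ ^ 2 - I₁ ^ 2) / (I₁ ^ 2 * I₂ ^ 2)| := abs_add_le _ _
      _ ≤ ((L : ℝ) * |d x|) / s ^ 2
          + K * (((L : ℝ) * (Real.sqrt Ωvol * D)) * (2 * K * Ωvol)) / (s ^ 2 * s ^ 2) :=
        add_le_add t1 t2
      _ = A * |d x| + Bc * D := by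
        rw [hAdef, hBcdef]
        have : s ^ 2 * s ^ 2 = s ^ 4 := by ring
        rw [this]
        field_simp
  -- replace the integrand by the g-version
  set w : EuclideanSpace ℝ (Fin N) → ℝ :=
    fun x => g (u₁ x) / I₁ ^ 2 - g (u₂ x) / I₂ ^ 2 with hwdef
  have hcongr : eLpNorm (fun x => f (u₁ x) / (∫ y in Ω, f (u₁ y)) ^ 2
      - f (u₂ x) / (∫ y in Ω, f (u₂ y)) ^ 2) 2 μ = eLpNorm w 2 μ := by
    have hae : ∀ᵐ x ∂(volume : Measure (EuclideanSpace ℝ (Fin N))), x ∈ Ω →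
        (f (u₁ x) / (∫ y in Ω, f (u₁ y)) ^ 2 - f (u₂ x) / (∫ y in Ω, f (u₂ y)) ^ 2
          = w x) := by
      refine Filter.Eventually.of_forall (fun x hx => ?_)
      simp only [hwdef]
      rw [hfg1 x hx, hfg2 x hx, hI1rw, hI2rw]
    exact eLpNorm_congr_ae ((ae_restrict_iff' hΩmeas).mpr hae)
  rw [hcongr]
  have hw_meas : Measurable w :=
    ((hg_cont.measurable.comp hm1).div_const _).sub
      ((hg_cont.measurable.comp hm2).div_const _)
  -- main estimate
  have hb1' : eLpNorm w 2 μ ≤ eLpNorm (fun x => A * |d x| + Bc * D) 2 μ := by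
    refine eLpNorm_mono_ae ((ae_restrict_iff' hΩmeas).mpr
      (Filter.Eventually.of_forall (fun x hx => ?_)))
    rw [Real.norm_eq_abs, Real.norm_eq_abs,
      abs_of_nonneg (add_nonneg (mul_nonneg hA0 (abs_nonneg _)) (mul_nonneg hBc0 hD0))]
    exact hpt x hx
  have hsplit : eLpNorm (fun x => A * |d x| + Bc * D) 2 μ
      ≤ eLpNorm (fun x => A * |d x|) 2 μ + eLpNorm (fun _ => Bc * D) 2 μ :=
    eLpNorm_add_le ((hd_meas.abs.const_mul _).aestronglyMeasurable)
      aestronglyMeasurable_const one_le_two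
  have h1 : eLpNorm (fun x => A * |d x|) 2 μ = ENNReal.ofReal A * E := by
    have heq : (fun x => A * |d x|) = A • (fun x => ‖d x‖) := by
      funext x; simp [Real.norm_eq_abs]
    rw [heq, eLpNorm_const_smul, eLpNorm_norm]
    congr 1
    exact (Real.enorm_eq_ofReal hA0)
  have h2 : eLpNorm (fun _ : EuclideanSpace ℝ (Fin N) => Bc * D) 2 μ
      ≤ ENNReal.ofReal (Bc * Real.sqrt Ωvol) * E := by
    rw [eLpNorm_const _ two_ne_zero hμne, hμuniv]
    have hvol : volume Ω = ENNReal.ofReal Ωvol := (ENNReal.ofReal_toReal hΩfin).symm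
    have hexp : (1 / (2 : ℝ≥0∞).toReal) = (1/2 : ℝ) := by norm_num
    rw [hexp, hvol, ENNReal.ofReal_rpow_of_nonneg ENNReal.toReal_nonneg (by norm_num),
      ← Real.sqrt_eq_rpow]
    have hnn : ‖Bc * D‖ₑ = ENNReal.ofReal (Bc * D) :=
      Real.enorm_eq_ofReal (mul_nonneg hBc0 hD0)
    rw [hnn, ← ENNReal.ofReal_mul (mul_nonneg hBc0 hD0)]
    have : Bc * D * Real.sqrt Ωvol = Bc * Real.sqrt Ωvol * D := by ring
    rw [this, ENNReal.ofReal_mul (mul_nonneg hBc0 (Real.sqrt_nonneg _)), hDdef,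
      ENNReal.ofReal_toReal hE_ne_top]
  calc eLpNorm w 2 μ ≤ eLpNorm (fun x => A * |d x|) 2 μ + eLpNorm (fun _ => Bc * D) 2 μ :=
        hb1'.trans hsplit
    _ ≤ ENNReal.ofReal A * E + ENNReal.ofReal (Bc * Real.sqrt Ωvol) * E :=
        add_le_add h1.le h2
    _ = ENNReal.ofReal (A + Bc * Real.sqrt Ωvol) * E := by
        rw [ENNReal.ofReal_add hA0 (mul_nonneg hBc0 (Real.sqrt_nonneg _)), add_mul]
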